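/- Let A be an n×m matrix over the tropical semiring T, let H be its H-class in M(T), and let Aut(C(A)) be the group of T-semimodule automorphisms of the column space C(A) of A. Then the left Schützenberger group Γ_H is isomorphic to Aut(C(A)); concretely, the map sending φ_X ∈ Γ_H to the automorphism x ↦ X ⊗ x of C(A) is a group isomorphism. -/

import Mathlib

open scoped Classical

/-- The tropical (max-plus) semiring carrier: `ℝ ∪ {-∞}`, where `⊔` is tropical
addition (max) and `+` is tropical multiplication (with `⊥ = -∞` absorbing). -/
abbrev Trop : Type := WithBot ℝ

/-- Tropical matrix multiplication: `(A ⊗ B) i j = max_k (A i k + B k j)`. -/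
def tmul {n m p : ℕ} (A : Fin n → Fin m → Trop) (B : Fin m → Fin p → Trop) :
    Fin n → Fin p → Trop :=
  fun i j => Finset.univ.sup fun k => A i k + B k j

/-- Tropical matrix-vector multiplication (column vector on the right). -/
def tvmul {n m : ℕ} (A : Fin n → Fin m → Trop) (v : Fin m → Trop) : Fin n → Trop :=
  fun i => Finset.univ.sup fun k => A i k + v k

/-- Tropical vector-matrix multiplication (row vector on the left). -/
def vtmul {n m : ℕ} (v : Fin n → Trop) (A : Fin n → Fin m → Trop) : Fin m → Trop :=
  fun j => Finset.univ.sup fun k => v k + A k j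

/-- The tropical identity matrix: `0` on the diagonal, `-∞` elsewhere. -/
def tId (n : ℕ) : Fin n → Fin n → Trop :=
  fun i j => if i = j then ((0 : ℝ) : Trop) else ⊥

/-- A monomial matrix: exactly one entry different from `-∞` in each row and each column. -/
def IsMonomial {n : ℕ} (P : Fin n → Fin n → Trop) : Prop :=
  (∀ i, ∃! j, P i j ≠ ⊥) ∧ (∀ j, ∃! i, P i j ≠ ⊥)

/-- A `T`-subsemimodule of `T^n`: closed under tropical addition (max) and scaling. -/
def IsTropSubmodule {n : ℕ} (S : Set (Fin n → Trop)) : Prop :=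
  (∀ x ∈ S, ∀ y ∈ S, x ⊔ y ∈ S) ∧
  (∀ c : Trop, ∀ x ∈ S, (fun i => c + x i) ∈ S)

/-- The `T`-subsemimodule generated by a set of vectors. -/
def genBy {n : ℕ} (G : Set (Fin n → Trop)) : Set (Fin n → Trop) :=
  ⋂₀ {S | IsTropSubmodule S ∧ G ⊆ S}

/-- The column space of a tropical matrix. -/
def colSpace {n m : ℕ} (A : Fin n → Fin m → Trop) : Set (Fin n → Trop) :=
  genBy {v | ∃ j, v = fun i => A i j}

/-- The row space of a tropical matrix. -/
def rowSpace {n m : ℕ} (A : Fin n → Fin m → Trop) : Set (Fin m → Trop) :=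
  genBy {v | ∃ i, v = fun j => A i j}

/-- The column rank: minimum cardinality of a generating set of the column space. -/
noncomputable def colRank {n m : ℕ} (A : Fin n → Fin m → Trop) : ℕ :=
  sInf {k | ∃ G : Finset (Fin n → Trop), G.card = k ∧ genBy (↑G) = colSpace A}

/-- The row rank: minimum cardinality of a generating set of the row space. -/
noncomputable def rowRank {n m : ℕ} (A : Fin n → Fin m → Trop) : ℕ :=
  sInf {k | ∃ G : Finset (Fin m → Trop), G.card = k ∧ genBy (↑G) = rowSpace A}

/-- Isomorphism of tropical subsemimodules (given by a bijection preserving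
tropical addition and scaling). -/
def TropIso {n m : ℕ} (S : Set (Fin n → Trop)) (S' : Set (Fin m → Trop)) : Prop :=
  ∃ f : (Fin n → Trop) → (Fin m → Trop),
    Set.BijOn f S S' ∧
    (∀ x ∈ S, ∀ y ∈ S, f (x ⊔ y) = f x ⊔ f y) ∧
    (∀ c : Trop, ∀ x ∈ S, f (fun i => c + x i) = fun i => c + f x i)

/-- The `H`-class of a matrix `A` in `M(T)` (among matrices of the same shape),
characterised by equality of column and row spaces. -/
def HSet {n m : ℕ} (A : Fin n → Fin m → Trop) : Set (Fin n → Fin m → Trop) :=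
  {B | colSpace B = colSpace A ∧ rowSpace B = rowSpace A}

/-- Adjacency of the coloured bipartite graph `B_A` of a tropical matrix. -/
def BAdj {r c : ℕ} (A : Fin r → Fin c → Trop) :
    (Fin r ⊕ Fin c) → (Fin r ⊕ Fin c) → Prop
  | Sum.inl i, Sum.inr j => A i j ≠ ⊥
  | Sum.inr j, Sum.inl i => A i j ≠ ⊥
  | _, _ => False

/-- Connectedness of the bipartite graph `B_A`. -/
def BConnected {r c : ℕ} (A : Fin r → Fin c → Trop) : Prop :=
  ∀ x y : Fin r ⊕ Fin c, Relation.ReflTransGen (BAdj A) x y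

/-- `lam` is a tropical eigenvalue of `P`. -/
def IsEig {n : ℕ} (P : Fin n → Fin n → Trop) (lam : Trop) : Prop :=
  ∃ v : Fin n → Trop, v ≠ (fun _ => ⊥) ∧ tvmul P v = fun i => lam + v i

/-- The group `G_A` of monomial matrices `P` with `C(PA) = C(A)`. -/
def GA {r c : ℕ} (A : Fin r → Fin c → Trop) : Set (Fin r → Fin r → Trop) :=
  {P | IsMonomial P ∧ colSpace (tmul P A) = colSpace A}

/-- The dual group `{}_AG` of monomial matrices `Q` with `R(AQ) = R(A)`. -/
def AGr {r c : ℕ} (A : Fin r → Fin c → Trop) : Set (Fin c → Fin c → Trop) :=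
  {Q | IsMonomial Q ∧ rowSpace (tmul A Q) = rowSpace A}

/-- The left Schützenberger group of the `H`-class of `A`: maps `H → H` given by left
multiplication by some matrix `X`. -/
def Schutz {n m : ℕ} (A : Fin n → Fin m → Trop) : Set (HSet A → HSet A) :=
  {φ | ∃ X : Fin n → Fin n → Trop, ∀ B : HSet A, (φ B).1 = tmul X B.1}

/-- The group of `T`-semimodule automorphisms of the column space `C(A)`, as bijections
of the subtype `↥(colSpace A)` preserving tropical addition and scaling. -/
def AutSet {n m : ℕ} (A : Fin n → Fin m → Trop) : Set (colSpace A → colSpace A) :=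
  {f | Function.Bijective f ∧
    (∀ x y : colSpace A, ∀ h : (x.1 ⊔ y.1) ∈ colSpace A,
      (f ⟨x.1 ⊔ y.1, h⟩).1 = (f x).1 ⊔ (f y).1) ∧
    (∀ c : Trop, ∀ x : colSpace A, ∀ h : (fun i => c + x.1 i) ∈ colSpace A,
      (f ⟨fun i => c + x.1 i, h⟩).1 = fun i => c + (f x).1 i)}

section Basic

lemma trop_add_sup (a b c : Trop) : a + (b ⊔ c) = (a + b) ⊔ (a + c) := by
  induction a using WithBot.recBotCoe with
  | bot => simp
  | coe a =>
    induction b using WithBot.recBotCoe with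
    | bot => simp
    | coe b =>
      induction c using WithBot.recBotCoe with
      | bot => simp
      | coe c =>
        rw [← WithBot.coe_sup, ← WithBot.coe_add, ← WithBot.coe_add, ← WithBot.coe_add,
          ← WithBot.coe_sup, WithBot.coe_inj]
        simpa using (max_add_add_left a b c).symm

lemma trop_sup_add (a b c : Trop) : (a ⊔ b) + c = (a + c) ⊔ (b + c) := by
  rw [add_comm, trop_add_sup, add_comm c a, add_comm c b]

lemma trop_add_finsup {ι : Type*} (s : Finset ι) (a : Trop) (f : ι → Trop) :
    a + s.sup f = s.sup fun k => a + f k := by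
  classical
  induction s using Finset.induction_on with
  | empty => simp
  | insert _ _ h ih => rw [Finset.sup_insert, Finset.sup_insert, trop_add_sup, ih]

lemma trop_finsup_add {ι : Type*} (s : Finset ι) (a : Trop) (f : ι → Trop) :
    s.sup f + a = s.sup fun k => f k + a := by
  rw [add_comm, trop_add_finsup]; simp [add_comm]

lemma trop_finsup_sup {ι : Type*} (s : Finset ι) (f g : ι → Trop) :
    s.sup (fun k => f k ⊔ g k) = s.sup f ⊔ s.sup g := by
  classical
  induction s using Finset.induction_on with
  | empty => simp
  | insert _ _ h ih =>
    rw [Finset.sup_insert, Finset.sup_insert, Finset.sup_insert, ih]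
    rw [sup_sup_sup_comm]

/-- real subtraction transported to `Trop`; only meaningful when both args are real. -/
noncomputable def rsub (a b : Trop) : Trop := ((a.unbotD 0 - b.unbotD 0 : ℝ) : Trop)

lemma rsub_coe (a b : ℝ) : rsub (a : Trop) (b : Trop) = ((a - b : ℝ) : Trop) := rfl

lemma rsub_add (a b : Trop) (ha : a ≠ ⊥) (hb : b ≠ ⊥) : rsub a b + b = a := by
  induction a using WithBot.recBotCoe with
  | bot => exact absurd rfl ha
  | coe a =>
    induction b using WithBot.recBotCoe with
    | bot => exact absurd rfl hb
    | coe b => rw [rsub_coe, ← WithBot.coe_add]; norm_num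

lemma trop_sub_le (a' b' : ℝ) (u v : Trop) (h : (b' : Trop) + u ≤ v + (a' : Trop)) :
    ((b' - a' : ℝ) : Trop) + u ≤ v := by
  induction u using WithBot.recBotCoe with
  | bot => simp
  | coe u =>
    induction v using WithBot.recBotCoe with
    | bot =>
      exfalso
      rw [← WithBot.coe_add] at h
      simp at h
    | coe v =>
      rw [← WithBot.coe_add, ← WithBot.coe_add, WithBot.coe_le_coe] at h
      rw [← WithBot.coe_add, WithBot.coe_le_coe]
      linarith

end Basic
section Gen

variable {n m : ℕ}

lemma subset_genBy (G : Set (Fin n → Trop)) : G ⊆ genBy G := by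
  intro x hx S hS
  exact hS.2 hx

lemma genBy_subset {G S : Set (Fin n → Trop)} (hS : IsTropSubmodule S) (h : G ⊆ S) :
    genBy G ⊆ S := by
  intro x hx
  exact hx S ⟨hS, h⟩

lemma isSubmodule_genBy (G : Set (Fin n → Trop)) : IsTropSubmodule (genBy G) := by
  constructor
  · intro x hx y hy S hS
    exact hS.1.1 x (hx S hS) y (hy S hS)
  · intro c x hx S hS
    exact hS.1.2 c x (hx S hS)

lemma isSubmodule_colSpace (A : Fin n → Fin m → Trop) : IsTropSubmodule (colSpace A) :=
  isSubmodule_genBy _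

lemma isSubmodule_rowSpace (A : Fin n → Fin m → Trop) : IsTropSubmodule (rowSpace A) :=
  isSubmodule_genBy _

lemma col_mem_colSpace (A : Fin n → Fin m → Trop) (j : Fin m) :
    (fun i => A i j) ∈ colSpace A :=
  subset_genBy _ ⟨j, rfl⟩

lemma row_mem_rowSpace (A : Fin n → Fin m → Trop) (i : Fin n) :
    (fun j => A i j) ∈ rowSpace A :=
  subset_genBy _ ⟨i, rfl⟩

lemma tvmul_scale {X : Fin n → Fin n → Trop} (c : Trop) (x : Fin n → Trop) :
    tvmul X (fun k => c + x k) = fun i => c + tvmul X x i := by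
  funext i
  unfold tvmul
  rw [trop_add_finsup]
  exact Finset.sup_congr rfl fun k _ => by rw [add_left_comm]

lemma tvmul_sup {X : Fin n → Fin n → Trop} (x y : Fin n → Trop) :
    tvmul X (x ⊔ y) = tvmul X x ⊔ tvmul X y := by
  funext i
  unfold tvmul
  rw [show (fun k => X i k + (x ⊔ y) k) = fun k => (X i k + x k) ⊔ (X i k + y k) from
    funext fun k => trop_add_sup _ _ _]
  exact trop_finsup_sup _ _ _

/-- A combination (finite sup of scalings) of members of `genBy G` is in `genBy G`. -/
lemma comb_mem {ι : Type*} {G : Set (Fin n → Trop)} (s : Finset ι) (hs : s.Nonempty)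
    (d : ι → Trop) (v : ι → Fin n → Trop) (hv : ∀ k ∈ s, v k ∈ genBy G) :
    (fun r => s.sup fun k => d k + v k r) ∈ genBy G := by
  classical
  induction hs using Finset.Nonempty.cons_induction with
  | singleton a =>
    simpa using (isSubmodule_genBy G).2 (d a) (v a) (hv a (by simp))
  | cons a s ha hs ih =>
    have h1 : (fun r => (Finset.cons a s ha).sup fun k => d k + v k r)
        = (fun r => d a + v a r) ⊔ (fun r => s.sup fun k => d k + v k r) := by
      funext r; rw [Finset.sup_cons]; rfl
    rw [h1]
    exact (isSubmodule_genBy G).1 _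
      ((isSubmodule_genBy G).2 (d a) (v a) (hv a (by simp)))
      _ (ih fun k hk => hv k (by simp [hk]))

end Gen
section Lin

variable {n m p : ℕ}

/-- `F` is linear on the column space of `A`. -/
def CondLin (A : Fin n → Fin m → Trop) (F : (Fin n → Trop) → (Fin n → Trop)) : Prop :=
  (∀ x y, x ∈ colSpace A → y ∈ colSpace A → F (x ⊔ y) = F x ⊔ F y) ∧
  (∀ c x, x ∈ colSpace A → F (fun r => c + x r) = fun r => c + F x r)

lemma condLin_tvmul (A : Fin n → Fin m → Trop) (X : Fin n → Fin n → Trop) :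
    CondLin A (tvmul X) :=
  ⟨fun x y _ _ => tvmul_sup x y, fun c x _ => tvmul_scale c x⟩

lemma condLin_id (A : Fin n → Fin m → Trop) : CondLin A id :=
  ⟨fun _ _ _ _ => rfl, fun _ _ _ => rfl⟩

lemma condLin_comp (A : Fin n → Fin m → Trop) (X Y : Fin n → Fin n → Trop) :
    CondLin A (fun v => tvmul Y (tvmul X v)) :=
  ⟨fun x y _ _ => by simp only []; rw [tvmul_sup, tvmul_sup],
   fun c x _ => by simp only []; rw [tvmul_scale, tvmul_scale]⟩

/-- Image of a combination of columns under a map linear on the column space. -/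
lemma comb_map {A : Fin n → Fin m → Trop} {F : (Fin n → Trop) → (Fin n → Trop)}
    (hF : CondLin A F) {ι : Type*} (s : Finset ι) (hs : s.Nonempty)
    (d : ι → Trop) (v w : ι → Fin n → Trop)
    (hv : ∀ k ∈ s, v k ∈ colSpace A) (hw : ∀ k ∈ s, F (v k) = w k) :
    F (fun r => s.sup fun k => d k + v k r) = fun r => s.sup fun k => d k + w k r := by
  classical
  induction hs using Finset.Nonempty.cons_induction with
  | singleton a =>
    simp only [Finset.sup_singleton]
    rw [hF.2 (d a) (v a) (hv a (by simp)), hw a (by simp)]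
  | cons a s ha hs ih =>
    have h1 : (fun r => (Finset.cons a s ha).sup fun k => d k + v k r)
        = (fun r => d a + v a r) ⊔ (fun r => s.sup fun k => d k + v k r) := by
      funext r; rw [Finset.sup_cons]; rfl
    have h2 : (fun r => (Finset.cons a s ha).sup fun k => d k + w k r)
        = (fun r => d a + w a r) ⊔ (fun r => s.sup fun k => d k + w k r) := by
      funext r; rw [Finset.sup_cons]; rfl
    rw [h1, h2,
      hF.1 _ _ ((isSubmodule_colSpace A).2 (d a) (v a) (hv a (by simp)))
        (comb_mem s hs d v fun k hk => hv k (by simp [hk])),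
      hF.2 (d a) (v a) (hv a (by simp)), hw a (by simp),
      ih (fun k hk => hv k (by simp [hk])) (fun k hk => hw k (by simp [hk]))]

/-- Two maps linear on `colSpace A` agreeing on the columns agree on all of `colSpace A`. -/
lemma agree {A : Fin n → Fin m → Trop} {F G : (Fin n → Trop) → (Fin n → Trop)}
    (hF : CondLin A F) (hG : CondLin A G)
    (h : ∀ j, F (fun i => A i j) = G (fun i => A i j)) :
    ∀ x ∈ colSpace A, F x = G x := by
  intro x hx
  have hsub : IsTropSubmodule {z | z ∈ colSpace A ∧ F z = G z} := by
    constructor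
    · intro a ha b hb
      refine ⟨(isSubmodule_colSpace A).1 a ha.1 b hb.1, ?_⟩
      rw [hF.1 a b ha.1 hb.1, hG.1 a b ha.1 hb.1, ha.2, hb.2]
    · intro c a ha
      refine ⟨(isSubmodule_colSpace A).2 c a ha.1, ?_⟩
      rw [hF.2 c a ha.1, hG.2 c a ha.1, ha.2]
  have : colSpace A ⊆ {z | z ∈ colSpace A ∧ F z = G z} :=
    genBy_subset hsub fun g hg => by
      obtain ⟨j, rfl⟩ := hg
      exact ⟨col_mem_colSpace A j, h j⟩
  exact (this hx).2

lemma col_tmul (X : Fin n → Fin n → Trop) (A : Fin n → Fin m → Trop) (j : Fin m) :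
    (fun i => tmul X A i j) = tvmul X (fun k => A k j) := rfl

lemma row_tmul (Y : Fin n → Fin n → Trop) (M : Fin n → Fin m → Trop) (i : Fin n) :
    (fun j => tmul Y M i j) = vtmul (Y i) M := rfl

lemma vtmul_sup' (z z' : Fin n → Trop) (M : Fin n → Fin m → Trop) :
    vtmul (z ⊔ z') M = vtmul z M ⊔ vtmul z' M := by
  funext j
  unfold vtmul
  rw [show (fun k => (z ⊔ z') k + M k j) = fun k => (z k + M k j) ⊔ (z' k + M k j) from
    funext fun k => trop_sup_add _ _ _]
  exact trop_finsup_sup _ _ _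

lemma vtmul_scale' (c : Trop) (z : Fin n → Trop) (M : Fin n → Fin m → Trop) :
    (fun j => c + vtmul z M j) = vtmul (fun k => c + z k) M := by
  funext j
  unfold vtmul
  rw [trop_add_finsup]
  exact Finset.sup_congr rfl fun k _ => by rw [add_assoc]

lemma vtmul_mem_rowSpace (M : Fin n → Fin m → Trop) (z : Fin n → Trop) (i0 : Fin n) :
    vtmul z M ∈ rowSpace M := by
  have := comb_mem (G := {v | ∃ i, v = fun j => M i j}) Finset.univ ⟨i0, Finset.mem_univ i0⟩
    z (fun k => fun j => M k j) (fun k _ => row_mem_rowSpace M k)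
  exact this

lemma rowSpace_subset_rowImage (M : Fin n → Fin m → Trop) :
    rowSpace M ⊆ {w | ∃ z, w = vtmul z M} := by
  apply genBy_subset
  · constructor
    · rintro x ⟨z, rfl⟩ y ⟨z', rfl⟩
      exact ⟨z ⊔ z', (vtmul_sup' z z' M).symm⟩
    · rintro c x ⟨z, rfl⟩
      exact ⟨fun k => c + z k, vtmul_scale' c z M⟩
  · rintro v ⟨i, rfl⟩
    refine ⟨fun k => if k = i then (0 : ℝ) else ⊥, ?_⟩
    funext j
    show M i j = Finset.univ.sup fun k => (if k = i then ((0:ℝ):Trop) else ⊥) + M k j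
    apply le_antisymm
    · have := Finset.le_sup (f := fun k => (if k = i then ((0:ℝ):Trop) else ⊥) + M k j)
        (Finset.mem_univ i)
      simpa using this
    · apply Finset.sup_le
      intro k _
      by_cases hk : k = i
      · subst hk; simp
      · simp [hk]

end Lin
section Crux

variable {n m : ℕ}

/-- The key "residuation" fact: if a map linear on `colSpace A` carries the columns of
`A` to the columns of `B`, then for every finite entry `B i j` there is a row index `k`
witnessing where the maximum can be attained. -/
lemma crux {A B : Fin n → Fin m → Trop} {F : (Fin n → Trop) → (Fin n → Trop)}
    (hF : CondLin A F) (hFcol : ∀ j, F (fun i => A i j) = fun i => B i j)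
    (i : Fin n) (j : Fin m) (hij : B i j ≠ ⊥) :
    ∃ k, A k j ≠ ⊥ ∧ ∀ j', B i j + A k j' ≤ B i j' + A k j := by
  classical
  by_contra hcon
  push_neg at hcon
  by_cases hall : ∀ k, A k j = ⊥
  · -- then the j-th column of A is bottom, so is that of B: contradiction
    have e1 : (F (fun r => (⊥ : Trop) + A r j)) i = ⊥ := by
      have h2 := hF.2 ⊥ (fun r => A r j) (col_mem_colSpace A j)
      have h3 := congrFun h2 i
      simpa using h3
    have e2 : (fun r => (⊥ : Trop) + A r j) = (fun r => A r j) := by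
      funext r; rw [hall r]; simp
    rw [e2, hFcol j] at e1
    exact hij e1
  · push_neg at hall
    obtain ⟨k₀, hk₀⟩ := hall
    obtain ⟨βr, hβr⟩ := WithBot.ne_bot_iff_exists.mp hij
    -- choose a large constant t
    have htex : ∃ t : ℝ, ∀ k j', A k j ≠ ⊥ → A k j' ≠ ⊥ → A k j < (t : Trop) + A k j' := by
      by_cases hMb : (Finset.univ.sup fun p : Fin n × Fin m => rsub (A p.1 j) (A p.1 p.2)) = ⊥
      · refine ⟨0, fun k j' h1 h2 => ?_⟩
        exfalso
        obtain ⟨a, ha⟩ := WithBot.ne_bot_iff_exists.mp h1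
        obtain ⟨a', ha'⟩ := WithBot.ne_bot_iff_exists.mp h2
        have hle : rsub (A k j) (A k j') ≤ (⊥ : Trop) := by
          simpa [hMb] using Finset.le_sup
            (f := fun p : Fin n × Fin m => rsub (A p.1 j) (A p.1 p.2)) (Finset.mem_univ (k, j'))
        rw [← ha, ← ha', rsub_coe] at hle
        exact WithBot.coe_ne_bot (le_bot_iff.mp hle)
      · obtain ⟨μ, hμ⟩ := WithBot.ne_bot_iff_exists.mp hMb
        refine ⟨μ + 1, fun k j' h1 h2 => ?_⟩
        obtain ⟨a, ha⟩ := WithBot.ne_bot_iff_exists.mp h1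
        obtain ⟨a', ha'⟩ := WithBot.ne_bot_iff_exists.mp h2
        have hle : rsub (A k j) (A k j') ≤ (μ : Trop) := by
          simpa [← hμ] using Finset.le_sup
            (f := fun p : Fin n × Fin m => rsub (A p.1 j) (A p.1 p.2)) (Finset.mem_univ (k, j'))
        rw [← ha, ← ha', rsub_coe, WithBot.coe_le_coe] at hle
        rw [← ha, ← ha', ← WithBot.coe_add, WithBot.coe_lt_coe]
        linarith
    obtain ⟨t, ht⟩ := htex
    -- the comparison combination w
    set d : Fin m → Trop := fun j' => if B i j' ≠ ⊥ then rsub (B i j) (B i j') else (t : Trop)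
      with hd
    have hdj : ∀ j', B i j' ≠ ⊥ → d j' = rsub (B i j) (B i j') := fun j' h => by
      rw [hd]; simp only [if_pos h]
    have hdj' : ∀ j', B i j' = ⊥ → d j' = (t : Trop) := fun j' h => by
      rw [hd]; simp only [h]; simp
    set w : Fin n → Trop := fun r => Finset.univ.sup fun j' => d j' + A r j' with hwdef
    have hw : w ∈ colSpace A :=
      comb_mem Finset.univ ⟨j, Finset.mem_univ j⟩ d (fun j' => fun r => A r j')
        (fun j' _ => col_mem_colSpace A j')
    have hFw : F w = fun r => Finset.univ.sup fun j' => d j' + B r j' :=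
      comb_map hF Finset.univ ⟨j, Finset.mem_univ j⟩ d _ _
        (fun j' _ => col_mem_colSpace A j') (fun j' _ => hFcol j')
    have hFwi : (F w) i = B i j := by
      have hgoal : Finset.univ.sup (fun j' => d j' + B i j') = B i j := by
        apply le_antisymm
        · apply Finset.sup_le
          intro j' _
          by_cases h' : B i j' ≠ ⊥
          · rw [hdj j' h', rsub_add (B i j) (B i j') hij h']
          · push_neg at h'
            rw [h', WithBot.add_bot]
            exact bot_le
        · have h2 : d j + B i j = B i j := by
            rw [hdj j hij, rsub_add (B i j) (B i j) hij hij]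
          conv_lhs => rw [← h2]
          exact Finset.le_sup (f := fun j' => d j' + B i j') (Finset.mem_univ j)
      rw [hFw]
      exact hgoal
    -- every relevant coordinate of w strictly dominates the j-th column of A
    have hwk : ∀ k, A k j ≠ ⊥ → A k j < w k := by
      intro k hk
      obtain ⟨j', hj'⟩ := hcon k hk
      have hAkj' : A k j' ≠ ⊥ := by
        intro hbot
        rw [hbot, WithBot.add_bot] at hj'
        exact not_lt_bot hj'
      have hterm : A k j < d j' + A k j' := by
        by_cases hB : B i j' ≠ ⊥
        · obtain ⟨a, ha⟩ := WithBot.ne_bot_iff_exists.mp hk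
          obtain ⟨a', ha'⟩ := WithBot.ne_bot_iff_exists.mp hAkj'
          obtain ⟨b', hb'⟩ := WithBot.ne_bot_iff_exists.mp hB
          rw [hdj j' hB, ← hb', ← hβr, rsub_coe, ← ha, ← ha', ← WithBot.coe_add,
            WithBot.coe_lt_coe]
          rw [← ha, ← ha', ← hb', ← hβr, ← WithBot.coe_add, ← WithBot.coe_add,
            WithBot.coe_lt_coe] at hj'
          linarith
        · push_neg at hB
          rw [hdj' j' hB]
          exact ht k j' hk hAkj'
      exact lt_of_lt_of_le hterm
        (by rw [hwdef]; exact Finset.le_sup (f := fun j'' => d j'' + A k j'') (Finset.mem_univ j'))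
    -- extract a positive gap ε
    set K := Finset.univ.filter fun k => A k j ≠ ⊥ with hK
    have hKne : K.Nonempty := ⟨k₀, by rw [hK]; simp [hk₀]⟩
    set E := K.image fun k => (w k).unbotD 0 - (A k j).unbotD 0 with hE
    have hEne : E.Nonempty := hKne.image _
    set ε := E.min' hEne with hεdef
    have hεpos : 0 < ε := by
      obtain ⟨k, hkK, hkE⟩ := Finset.mem_image.mp (E.min'_mem hEne)
      have hk : A k j ≠ ⊥ := by rw [hK] at hkK; simpa using hkK
      have hlt := hwk k hk
      obtain ⟨a, ha⟩ := WithBot.ne_bot_iff_exists.mp hk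
      have hwkb : w k ≠ ⊥ := fun hb => by rw [hb] at hlt; exact not_lt_bot hlt
      obtain ⟨w0, hw0⟩ := WithBot.ne_bot_iff_exists.mp hwkb
      rw [← ha, ← hw0, WithBot.coe_lt_coe] at hlt
      rw [hεdef, ← hkE, ← ha, ← hw0]
      simp only [WithBot.unbotD_coe]
      linarith
    have hεle : ∀ k, (ε : Trop) + A k j ≤ w k := by
      intro k
      by_cases hk : A k j ≠ ⊥
      · have hmem : ((w k).unbotD 0 - (A k j).unbotD 0) ∈ E := by
          rw [hE]
          exact Finset.mem_image_of_mem _ (by rw [hK]; simp [hk])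
        have hle : ε ≤ (w k).unbotD 0 - (A k j).unbotD 0 := Finset.min'_le _ _ hmem
        have hlt := hwk k hk
        obtain ⟨a, ha⟩ := WithBot.ne_bot_iff_exists.mp hk
        have hwkb : w k ≠ ⊥ := fun hb => by rw [hb] at hlt; exact not_lt_bot hlt
        obtain ⟨w0, hw0⟩ := WithBot.ne_bot_iff_exists.mp hwkb
        rw [← ha, ← hw0, WithBot.unbotD_coe, WithBot.unbotD_coe] at hle
        rw [← ha, ← hw0, ← WithBot.coe_add, WithBot.coe_le_coe]
        linarith
      · push_neg at hk
        rw [hk, WithBot.add_bot]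
        exact bot_le
    -- conclude
    have hsup : w ⊔ (fun r => (ε : Trop) + A r j) = w := by
      funext r
      exact sup_eq_left.mpr (hεle r)
    have hmem2 : (fun r => (ε : Trop) + A r j) ∈ colSpace A :=
      (isSubmodule_colSpace A).2 _ _ (col_mem_colSpace A j)
    have h5 := hF.1 w (fun r => (ε : Trop) + A r j) hw hmem2
    rw [hsup] at h5
    have h6 : (F (fun r => (ε : Trop) + A r j)) i = (ε : Trop) + B i j := by
      have h2 := hF.2 (ε : Trop) (fun r => A r j) (col_mem_colSpace A j)
      have h3 := congrFun h2 i
      rw [hFcol j] at h3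
      simpa using h3
    have h7 := congrFun h5 i
    have h8 : (F w ⊔ F fun r => (ε : Trop) + A r j) i
        = (F w) i ⊔ (F fun r => (ε : Trop) + A r j) i := rfl
    rw [h8, hFwi, h6] at h7
    -- h7 : B i j = B i j ⊔ (ε + B i j)
    have h9 : (ε : Trop) + B i j ≤ B i j := sup_eq_left.mp h7.symm
    rw [← hβr, ← WithBot.coe_add, WithBot.coe_le_coe] at h9
    linarith

end Crux
section RowLemma

variable {n m : ℕ}

lemma trop_add_le_add_right {a b : Trop} (h : a ≤ b) (c : Trop) : a + c ≤ b + c := by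
  induction c using WithBot.recBotCoe with
  | bot => simp
  | coe c =>
    induction a using WithBot.recBotCoe with
    | bot => simp
    | coe a =>
      induction b using WithBot.recBotCoe with
      | bot => simp at h
      | coe b =>
        rw [WithBot.coe_le_coe] at h
        rw [← WithBot.coe_add, ← WithBot.coe_add, WithBot.coe_le_coe]
        linarith

/-- Each row of `B` is realizable as a tropical combination of the rows of `A`,
provided some map linear on `colSpace A` carries columns of `A` to columns of `B`. -/
lemma row_lemma {A B : Fin n → Fin m → Trop} {F : (Fin n → Trop) → (Fin n → Trop)}
    (hF : CondLin A F) (hFcol : ∀ j, F (fun i => A i j) = fun i => B i j) (i : Fin n) :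
    ∃ y : Fin n → Trop, ∀ j, (Finset.univ.sup fun k => y k + A k j) = B i j := by
  classical
  have hch : ∀ j : Fin m, ∃ k, B i j ≠ ⊥ →
      (A k j ≠ ⊥ ∧ ∀ j', B i j + A k j' ≤ B i j' + A k j) := by
    intro j
    by_cases h : B i j ≠ ⊥
    · obtain ⟨k, hk⟩ := crux hF hFcol i j h
      exact ⟨k, fun _ => hk⟩
    · exact ⟨i, fun h' => absurd h' h⟩
  choose kf hkf using hch
  set y : Fin n → Trop := fun k =>
    (Finset.univ.filter fun j' => B i j' ≠ ⊥ ∧ kf j' = k).sup fun j' => rsub (B i j') (A k j')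
    with hy
  refine ⟨y, fun j => ?_⟩
  apply le_antisymm
  · apply Finset.sup_le
    intro k _
    have hyk : y k = (Finset.univ.filter fun j' => B i j' ≠ ⊥ ∧ kf j' = k).sup
        fun j' => rsub (B i j') (A k j') := rfl
    rw [hyk, trop_finsup_add]
    apply Finset.sup_le
    intro j' hj'
    rw [Finset.mem_filter] at hj'
    obtain ⟨-, hB', hkeq⟩ := hj'
    have hk2 := (hkf j' hB').2 j
    rw [hkeq] at hk2
    -- hk2 : B i j' + A k j ≤ B i j + A k j'
    have hA' : A k j' ≠ ⊥ := by
      have := (hkf j' hB').1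
      rwa [hkeq] at this
    obtain ⟨b', hb'⟩ := WithBot.ne_bot_iff_exists.mp hB'
    obtain ⟨a', ha'⟩ := WithBot.ne_bot_iff_exists.mp hA'
    rw [← hb', ← ha', rsub_coe]
    apply trop_sub_le
    rw [hb', ha']
    exact hk2
  · by_cases hj : B i j ≠ ⊥
    · have hmem : j ∈ Finset.univ.filter fun j' => B i j' ≠ ⊥ ∧ kf j' = kf j := by
        simp [hj]
      have h1 : rsub (B i j) (A (kf j) j) ≤ y (kf j) :=
        Finset.le_sup (f := fun j' => rsub (B i j') (A (kf j) j')) hmem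
      calc B i j = rsub (B i j) (A (kf j) j) + A (kf j) j :=
            (rsub_add _ _ hj (hkf j hj).1).symm
        _ ≤ y (kf j) + A (kf j) j := trop_add_le_add_right h1 _
        _ ≤ _ := Finset.le_sup (f := fun k => y k + A k j) (Finset.mem_univ (kf j))
    · push_neg at hj
      rw [hj]
      exact bot_le

end RowLemma
section Assemble

variable {n m : ℕ}

/-- A tropical-linear matrix map sends a column space into any submodule containing
the images of the columns. -/
lemma tvmul_maps {p : ℕ} {C : Fin n → Fin p → Trop} {S : Set (Fin n → Trop)}
    (hS : IsTropSubmodule S) {X : Fin n → Fin n → Trop}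
    (h : ∀ j, tvmul X (fun i => C i j) ∈ S) :
    ∀ x ∈ colSpace C, tvmul X x ∈ S := by
  intro x hx
  have hsub : IsTropSubmodule {z | tvmul X z ∈ S} := by
    constructor
    · intro a ha b hb
      show tvmul X (a ⊔ b) ∈ S
      rw [tvmul_sup]
      exact hS.1 _ ha _ hb
    · intro c a ha
      show tvmul X (fun i => c + a i) ∈ S
      rw [tvmul_scale]
      exact hS.2 c _ ha
  exact genBy_subset hsub (by rintro v ⟨j, rfl⟩; exact h j) hx

lemma tvmul_surjOn {A : Fin n → Fin m → Trop} {X : Fin n → Fin n → Trop}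
    (hcolEq : colSpace (tmul X A) = colSpace A) :
    ∀ x ∈ colSpace A, ∃ y, y ∈ colSpace A ∧ tvmul X y = x := by
  intro x hx
  have hsub : IsTropSubmodule {z | ∃ y, y ∈ colSpace A ∧ tvmul X y = z} := by
    constructor
    · rintro a ⟨y1, hy1, rfl⟩ b ⟨y2, hy2, rfl⟩
      exact ⟨y1 ⊔ y2, (isSubmodule_colSpace A).1 _ hy1 _ hy2, tvmul_sup y1 y2⟩
    · rintro c a ⟨y1, hy1, rfl⟩
      exact ⟨fun i => c + y1 i, (isSubmodule_colSpace A).2 c _ hy1, tvmul_scale c y1⟩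
  have hsubs : colSpace (tmul X A) ⊆ {z | ∃ y, y ∈ colSpace A ∧ tvmul X y = z} := by
    apply genBy_subset hsub
    rintro v ⟨j, rfl⟩
    exact ⟨fun i => A i j, col_mem_colSpace A j, (col_tmul X A j).symm⟩
  exact hsubs (hcolEq.symm ▸ hx)

lemma tvmul_injOn {A : Fin n → Fin m → Trop} {X : Fin n → Fin n → Trop}
    (hrowEq : rowSpace (tmul X A) = rowSpace A) :
    ∀ x ∈ colSpace A, ∀ y ∈ colSpace A, tvmul X x = tvmul X y → x = y := by
  have hrows : ∀ i : Fin n, ∃ z, (fun j => A i j) = vtmul z (tmul X A) := by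
    intro i
    have h1 : (fun j => A i j) ∈ rowSpace (tmul X A) := hrowEq ▸ row_mem_rowSpace A i
    exact rowSpace_subset_rowImage _ h1
  choose Y hY using hrows
  have hYX : tmul Y (tmul X A) = A := by
    funext i j
    exact (congrFun (hY i) j).symm
  have hag := agree (condLin_comp A X Y) (condLin_id A) (fun j => by
    show tvmul Y (tvmul X fun i => A i j) = _
    rw [← col_tmul X A j, ← col_tmul Y (tmul X A) j, hYX]
    rfl)
  intro x hx y hy hxy
  have e1 := hag x hx
  have e2 := hag y hy
  rw [hxy] at e1
  rw [e1] at e2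
  simpa using e2

lemma hA_mem_HSet (A : Fin n → Fin m → Trop) : A ∈ HSet A := ⟨rfl, rfl⟩

lemma tvmul_agree_of_tmul_eq {A : Fin n → Fin m → Trop} {X X' : Fin n → Fin n → Trop}
    (h : tmul X A = tmul X' A) : ∀ x ∈ colSpace A, tvmul X x = tvmul X' x :=
  agree (condLin_tvmul A X) (condLin_tvmul A X')
    (fun j => by rw [← col_tmul, ← col_tmul, h])

lemma tvmul_comp_agree {A : Fin n → Fin m → Trop} {Xc Xf Xp : Fin n → Fin n → Trop}
    (h : tmul Xc A = tmul Xf (tmul Xp A)) :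
    ∀ x ∈ colSpace A, tvmul Xc x = tvmul Xf (tvmul Xp x) := by
  have := agree (condLin_tvmul A Xc) (condLin_comp A Xp Xf) (fun j => by
    show tvmul Xc (fun i => A i j) = tvmul Xf (tvmul Xp fun i => A i j)
    rw [← col_tmul Xc A j, h, col_tmul Xf (tmul Xp A) j, col_tmul Xp A j])
  intro x hx
  exact this x hx

/-- membership used to define the lift of `X` to the column space -/
lemma tvmul_mem_colSpace_of {A : Fin n → Fin m → Trop} {X : Fin n → Fin n → Trop}
    (hX : colSpace (tmul X A) = colSpace A) :
    ∀ x ∈ colSpace A, tvmul X x ∈ colSpace A :=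
  tvmul_maps (isSubmodule_colSpace A)
    (fun j => by rw [← col_tmul]; exact hX ▸ col_mem_colSpace (tmul X A) j)

/-- The lift of left multiplication by `X` to the column space. -/
def liftX (A : Fin n → Fin m → Trop) (X : Fin n → Fin n → Trop)
    (hX : tmul X A ∈ HSet A) : colSpace A → colSpace A :=
  fun x => ⟨tvmul X x.1, tvmul_mem_colSpace_of hX.1 x.1 x.2⟩

lemma liftX_mem_AutSet (A : Fin n → Fin m → Trop) (X : Fin n → Fin n → Trop)
    (hX : tmul X A ∈ HSet A) : liftX A X hX ∈ AutSet A := by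
  refine ⟨⟨?_, ?_⟩, ?_, ?_⟩
  · intro x y h
    exact Subtype.ext (tvmul_injOn hX.2 x.1 x.2 y.1 y.2 (congrArg Subtype.val h))
  · intro x
    obtain ⟨y, hy, he⟩ := tvmul_surjOn hX.1 x.1 x.2
    exact ⟨⟨y, hy⟩, Subtype.ext he⟩
  · intro x y h
    show tvmul X (x.1 ⊔ y.1) = tvmul X x.1 ⊔ tvmul X y.1
    exact tvmul_sup x.1 y.1
  · intro c x h
    show tvmul X (fun i => c + x.1 i) = fun i => c + tvmul X x.1 i
    exact tvmul_scale c x.1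

end Assemble
section Preimage

variable {n m : ℕ}

lemma exists_preimage (A : Fin n → Fin m → Trop) (f : colSpace A → colSpace A)
    (hf : f ∈ AutSet A) :
    ∃ X : Fin n → Fin n → Trop,
      (∀ B' : HSet A, tmul X B'.1 ∈ HSet A) ∧
      (∀ x (hx : x ∈ colSpace A), tvmul X x = (f ⟨x, hx⟩).1) := by
  classical
  obtain ⟨hbij, hfsup, hfsc⟩ := hf
  -- a total extension of f
  set F : (Fin n → Trop) → (Fin n → Trop) :=
    fun x => if h : x ∈ colSpace A then (f ⟨x, h⟩).1 else x with hFdef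
  have hFval : ∀ x (h : x ∈ colSpace A), F x = (f ⟨x, h⟩).1 := by
    intro x h
    show (if h' : x ∈ colSpace A then (f ⟨x, h'⟩).1 else x) = (f ⟨x, h⟩).1
    rw [dif_pos h]
  have hFmem : ∀ x (h : x ∈ colSpace A), F x ∈ colSpace A := by
    intro x h
    rw [hFval x h]
    exact (f ⟨x, h⟩).2
  have hFcl : CondLin A F := by
    constructor
    · intro x y hx hy
      have hxy : (x ⊔ y) ∈ colSpace A := (isSubmodule_colSpace A).1 x hx y hy
      rw [hFval _ hxy, hFval _ hx, hFval _ hy]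
      exact hfsup ⟨x, hx⟩ ⟨y, hy⟩ hxy
    · intro c x hx
      have hcx : (fun i => c + x i) ∈ colSpace A := (isSubmodule_colSpace A).2 c x hx
      rw [hFval _ hcx, hFval _ hx]
      exact hfsc c ⟨x, hx⟩ hcx
  have hFcol : ∀ j, F (fun i => A i j) = fun i => F (fun i' => A i' j) i := fun j => rfl
  -- realize F by a matrix X
  choose y hy using fun i => row_lemma hFcl hFcol i
  set X : Fin n → Fin n → Trop := y with hXdef
  have htmul : ∀ j, (fun i => tmul X A i j) = F (fun i => A i j) := by
    intro j
    funext i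
    exact hy i j
  have hXcols : ∀ j, tvmul X (fun i => A i j) = F (fun i => A i j) := by
    intro j
    rw [← col_tmul, htmul j]
  have hXagree : ∀ x, x ∈ colSpace A → tvmul X x = F x :=
    agree (condLin_tvmul A X) hFcl hXcols
  -- the inverse of f
  obtain ⟨g, hgf, hfg⟩ := Function.bijective_iff_has_inverse.mp hbij
  set G : (Fin n → Trop) → (Fin n → Trop) :=
    fun x => if h : x ∈ colSpace A then (g ⟨x, h⟩).1 else x with hGdef
  have hGval : ∀ x (h : x ∈ colSpace A), G x = (g ⟨x, h⟩).1 := by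
    intro x h
    show (if h' : x ∈ colSpace A then (g ⟨x, h'⟩).1 else x) = (g ⟨x, h⟩).1
    rw [dif_pos h]
  have hGf : ∀ x : colSpace A, G (f x).1 = x.1 := by
    intro x
    rw [hGval _ (f x).2]
    have he : (⟨(f x).1, (f x).2⟩ : colSpace A) = f x := rfl
    rw [he, hgf x]
  have hGlin : CondLin A G := by
    constructor
    · intro u v hu hv
      have huv : (u ⊔ v) ∈ colSpace A := (isSubmodule_colSpace A).1 u hu v hv
      set a := g ⟨u, hu⟩ with hadef
      set b := g ⟨v, hv⟩ with hbdef
      have hfa : f a = ⟨u, hu⟩ := hfg ⟨u, hu⟩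
      have hfb : f b = ⟨v, hv⟩ := hfg ⟨v, hv⟩
      have hsm : (a.1 ⊔ b.1) ∈ colSpace A := (isSubmodule_colSpace A).1 a.1 a.2 b.1 b.2
      have h1 : (f ⟨a.1 ⊔ b.1, hsm⟩).1 = (f a).1 ⊔ (f b).1 := hfsup a b hsm
      rw [hfa, hfb] at h1
      have h2 : f ⟨a.1 ⊔ b.1, hsm⟩ = ⟨u ⊔ v, huv⟩ := Subtype.ext h1
      rw [hGval _ huv, hGval _ hu, hGval _ hv, ← h2, hgf ⟨a.1 ⊔ b.1, hsm⟩]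
    · intro c u hu
      have hcu : (fun i => c + u i) ∈ colSpace A := (isSubmodule_colSpace A).2 c u hu
      set a := g ⟨u, hu⟩ with hadef
      have hfa : f a = ⟨u, hu⟩ := hfg ⟨u, hu⟩
      have hsm : (fun i => c + a.1 i) ∈ colSpace A := (isSubmodule_colSpace A).2 c a.1 a.2
      have h1 : (f ⟨fun i => c + a.1 i, hsm⟩).1 = fun i => c + (f a).1 i := hfsc c a hsm
      rw [hfa] at h1
      have h2 : f ⟨fun i => c + a.1 i, hsm⟩ = ⟨fun i => c + u i, hcu⟩ := Subtype.ext h1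
      rw [hGval _ hcu, hGval _ hu, ← h2, hgf ⟨fun i => c + a.1 i, hsm⟩]
  -- X maps colSpace A to itself
  have hXcs : ∀ x, x ∈ colSpace A → tvmul X x ∈ colSpace A := by
    intro x hx
    rw [hXagree x hx]
    exact hFmem x hx
  refine ⟨X, ?_, fun x hx => by rw [hXagree x hx, hFval x hx]⟩
  intro B'
  obtain ⟨hc, hr⟩ := B'.2
  -- column space of X ⊗ B' equals colSpace A
  have hcEq : colSpace (tmul X B'.1) = colSpace A := by
    apply Set.Subset.antisymm
    · apply genBy_subset (isSubmodule_colSpace A)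
      rintro v ⟨j, rfl⟩
      rw [col_tmul]
      exact tvmul_maps (isSubmodule_colSpace A)
        (fun j' => hXcs _ (hc ▸ col_mem_colSpace B'.1 j'))
        (fun i => B'.1 i j) (hc ▸ col_mem_colSpace B'.1 j)
    · intro x hx
      obtain ⟨ys, hys⟩ := hbij.2 ⟨x, hx⟩
      have hx1 : tvmul X ys.1 = x := by
        rw [hXagree ys.1 ys.2, hFval ys.1 ys.2]
        have he : (⟨ys.1, ys.2⟩ : colSpace A) = ys := rfl
        rw [he, hys]
      rw [← hx1]
      exact tvmul_maps (isSubmodule_colSpace (tmul X B'.1))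
        (fun j' => by rw [← col_tmul]; exact col_mem_colSpace _ j')
        ys.1 (by rw [hc]; exact ys.2)
  refine ⟨hcEq, ?_⟩
  -- row space of X ⊗ B' equals rowSpace A
  apply Set.Subset.antisymm
  · have hsub : rowSpace (tmul X B'.1) ⊆ rowSpace B'.1 := by
      apply genBy_subset (isSubmodule_rowSpace B'.1)
      rintro v ⟨i, rfl⟩
      rw [row_tmul]
      exact vtmul_mem_rowSpace B'.1 (X i) i
    exact hr ▸ hsub
  · suffices h : rowSpace B'.1 ⊆ rowSpace (tmul X B'.1) by rw [← hr]; exact h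
    apply genBy_subset (isSubmodule_rowSpace (tmul X B'.1))
    rintro v ⟨i, rfl⟩
    have hGlin' : CondLin (tmul X B'.1) G :=
      ⟨fun x y' hx hy' => hGlin.1 x y' (hcEq ▸ hx) (hcEq ▸ hy'),
       fun c x hx => hGlin.2 c x (hcEq ▸ hx)⟩
    have hGcols' : ∀ j, G (fun i' => (tmul X B'.1) i' j) = fun i' => B'.1 i' j := by
      intro j
      have hm : (fun i' => B'.1 i' j) ∈ colSpace A := hc ▸ col_mem_colSpace B'.1 j
      rw [col_tmul, hXagree _ hm, hFval _ hm]
      exact hGf ⟨_, hm⟩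
    obtain ⟨z, hz⟩ := row_lemma hGlin' hGcols' i
    rw [show (fun j => B'.1 i j) = vtmul z (tmul X B'.1) from (funext hz).symm]
    exact vtmul_mem_rowSpace _ z i

end Preimage
/-- The Schützenberger group `Γ_H` of the `H`-class of `A` is isomorphic
to `Aut(C(A))`, via the map sending `φ_X` to the automorphism `x ↦ X ⊗ x` of `C(A)`. -/
theorem stmt_4 {n m : ℕ} (A : Fin n → Fin m → Trop) :
    ∃ Φ : Schutz A → AutSet A,
      Function.Bijective Φ ∧
      (∀ φ ψ : Schutz A, ∀ h : (φ.1 ∘ ψ.1) ∈ Schutz A,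
        (Φ ⟨φ.1 ∘ ψ.1, h⟩).1 = (Φ φ).1 ∘ (Φ ψ).1) ∧
      (∀ φ : Schutz A, ∀ X : Fin n → Fin n → Trop,
        (∀ B : HSet A, (φ.1 B).1 = tmul X B.1) →
        ∀ x : colSpace A, ((Φ φ).1 x).1 = tvmul X x.1) := by
  classical
  have hA : A ∈ HSet A := hA_mem_HSet A
  have hch : ∀ φs : Schutz A, ∀ B : HSet A, (φs.1 B).1 = tmul (Classical.choose φs.2) B.1 :=
    fun φs => Classical.choose_spec φs.2
  have hHS : ∀ φs : Schutz A, tmul (Classical.choose φs.2) A ∈ HSet A := by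
    intro φs
    have h := hch φs ⟨A, hA⟩
    rw [← h]
    exact (φs.1 ⟨A, hA⟩).2
  refine ⟨fun φs => ⟨liftX A (Classical.choose φs.2) (hHS φs),
    liftX_mem_AutSet _ _ _⟩, ⟨?_, ?_⟩, ?_, ?_⟩
  · -- injectivity
    intro φ ψ h
    have hag : ∀ x, x ∈ colSpace A →
        tvmul (Classical.choose φ.2) x = tvmul (Classical.choose ψ.2) x := by
      intro x hx
      exact congrArg Subtype.val (congrFun (congrArg Subtype.val h) ⟨x, hx⟩)
    apply Subtype.ext
    funext B
    apply Subtype.ext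
    rw [hch φ B, hch ψ B]
    funext i j
    have hm : (fun i' => B.1 i' j) ∈ colSpace A := by
      have := col_mem_colSpace B.1 j
      rwa [B.2.1] at this
    exact congrFun (hag (fun i' => B.1 i' j) hm) i
  · -- surjectivity
    intro fs
    obtain ⟨X, hpres, hagr⟩ := exists_preimage A fs.1 fs.2
    have hmem : (fun B' : HSet A => (⟨tmul X B'.1, hpres B'⟩ : HSet A)) ∈ Schutz A :=
      ⟨X, fun B => rfl⟩
    refine ⟨⟨_, hmem⟩, ?_⟩
    apply Subtype.ext
    funext x
    apply Subtype.ext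
    show tvmul (Classical.choose hmem) x.1 = (fs.1 x).1
    have h1 : tmul (Classical.choose hmem) A = tmul X A :=
      (Classical.choose_spec hmem ⟨A, hA⟩).symm
    rw [tvmul_agree_of_tmul_eq h1 x.1 x.2, hagr x.1 x.2]
  · -- composition
    intro φ ψ h
    funext x
    apply Subtype.ext
    show tvmul (Classical.choose h) x.1
      = tvmul (Classical.choose φ.2) (tvmul (Classical.choose ψ.2) x.1)
    have h1 : tmul (Classical.choose h) A
        = tmul (Classical.choose φ.2) (tmul (Classical.choose ψ.2) A) := by
      have h2 := Classical.choose_spec h ⟨A, hA⟩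
      rw [← h2]
      show (φ.1 (ψ.1 ⟨A, hA⟩)).1 = _
      rw [hch φ (ψ.1 ⟨A, hA⟩), hch ψ ⟨A, hA⟩]
    exact tvmul_comp_agree h1 x.1 x.2
  · -- compatibility with a given witness X
    intro φ X hX x
    show tvmul (Classical.choose φ.2) x.1 = tvmul X x.1
    have h1 : tmul (Classical.choose φ.2) A = tmul X A := by
      rw [← hch φ ⟨A, hA⟩, hX ⟨A, hA⟩]
    exact tvmul_agree_of_tmul_eq h1 x.1 x.2
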